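/- Let m be a natural number, x_1,...,x_m integers, and θ a convex function on the integer interval [min x_i, max x_i] (i.e., θ(x) − θ(x−1) is nondecreasing). If integers A, B, k satisfy A + B = m and A·k + B·(k+1) = ∑ x_i, then ∑ θ(x_i) ≥ A·θ(k) + B·θ(k+1). -/

import Mathlib

theorem stmt_11 (m : ℕ) (x : Fin m → ℤ) (θ : ℤ → ℝ) (k A B : ℤ)
    (hconv : ∀ y : ℤ,
      (((Finset.univ.image x) ∪ {k, k + 1}).min' (by simp) ≤ y - 1) →
      (y + 1 ≤ ((Finset.univ.image x) ∪ {k, k + 1}).max' (by simp)) →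
      θ y - θ (y - 1) ≤ θ (y + 1) - θ y)
    (hAB : A + B = m) (hsum : A * k + B * (k + 1) = ∑ j, x j) :
    (A : ℝ) * θ k + (B : ℝ) * θ (k + 1) ≤ ∑ j, θ (x j) := by
  set S : Finset ℤ := (Finset.univ.image x) ∪ {k, k + 1} with hS
  have hmem_k : k ∈ S := by simp [hS]
  have hmem_k1 : k + 1 ∈ S := by simp [hS]
  have hne : S.Nonempty := ⟨k, hmem_k⟩
  set mn := S.min' hne with hmn
  set mx := S.max' hne with hmx
  have hconv' : ∀ y : ℤ, mn ≤ y - 1 → y + 1 ≤ mx →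
      θ y - θ (y - 1) ≤ θ (y + 1) - θ y := hconv
  set c := θ (k + 1) - θ k with hc
  have hmn_k : mn ≤ k := Finset.min'_le _ _ hmem_k
  have hmx_k1 : k + 1 ≤ mx := Finset.le_max' _ _ hmem_k1
  -- slopes are monotone
  have hmono : ∀ a b : ℤ, mn ≤ a - 1 → a ≤ b → b ≤ mx →
      θ a - θ (a - 1) ≤ θ b - θ (b - 1) := by
    intro a b ha hab
    refine Int.le_induction
      (motive := fun b _ => b ≤ mx → θ a - θ (a - 1) ≤ θ b - θ (b - 1))
      (fun _ => le_refl _) ?_ b hab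
    intro b hb ih hbmx
    have h1 : θ a - θ (a - 1) ≤ θ b - θ (b - 1) := ih (by linarith)
    have h2 := hconv' b (by linarith) (by linarith)
    have hb1 : b + 1 - 1 = b := by ring
    rw [hb1]
    linarith
  -- supporting line, upward
  have up : ∀ z : ℤ, k + 1 ≤ z → z ≤ mx →
      θ k + ((z - k : ℤ) : ℝ) * c ≤ θ z := by
    intro z hz
    refine Int.le_induction
      (motive := fun z _ => z ≤ mx → θ k + ((z - k : ℤ) : ℝ) * c ≤ θ z) ?_ ?_ z hz
    · intro _
      have h1 : ((k + 1 - k : ℤ) : ℝ) = 1 := by push_cast; ring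
      rw [h1, hc]; ring_nf; exact le_refl _
    · intro z hz ih hmx'
      have ihz := ih (by linarith)
      have hm := hmono (k + 1) (z + 1) (by linarith) (by linarith) hmx'
      have e1 : k + 1 - 1 = k := by ring
      have e2 : z + 1 - 1 = z := by ring
      rw [e1, e2] at hm
      have : ((z + 1 - k : ℤ) : ℝ) = ((z - k : ℤ) : ℝ) + 1 := by push_cast; ring
      rw [this]
      have : θ (z + 1) - θ z ≥ c := by rw [hc] at *; linarith
      linarith
  -- supporting line, downward
  have down : ∀ z : ℤ, z ≤ k → mn ≤ z →
      θ k + ((z - k : ℤ) : ℝ) * c ≤ θ z := by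
    intro z hz
    refine Int.le_induction_down
      (motive := fun z _ => mn ≤ z → θ k + ((z - k : ℤ) : ℝ) * c ≤ θ z) ?_ ?_ z hz
    · intro _
      have h1 : ((k - k : ℤ) : ℝ) = 0 := by push_cast; ring
      rw [h1]; simp
    · intro z hz ih hmn'
      have ihz := ih (by linarith)
      have hm := hmono z (k + 1) (by linarith) (by linarith) hmx_k1
      have e1 : k + 1 - 1 = k := by ring
      rw [e1] at hm
      have : ((z - 1 - k : ℤ) : ℝ) = ((z - k : ℤ) : ℝ) - 1 := by push_cast; ring
      rw [this]
      have : θ z - θ (z - 1) ≤ c := by rw [hc] at *; linarith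
      linarith
  have key : ∀ j, θ k + ((x j - k : ℤ) : ℝ) * c ≤ θ (x j) := by
    intro j
    have hmem : x j ∈ S := by simp [hS]
    have h1 : mn ≤ x j := Finset.min'_le _ _ hmem
    have h2 : x j ≤ mx := Finset.le_max' _ _ hmem
    rcases le_or_gt (x j) k with h | h
    · exact down _ h h1
    · exact up _ (by linarith) h2
  have hsum2 : ∑ j, (θ k + ((x j - k : ℤ) : ℝ) * c) ≤ ∑ j, θ (x j) :=
    Finset.sum_le_sum fun j _ => key j
  have hl : ∑ j, (θ k + ((x j - k : ℤ) : ℝ) * c)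
      = (m : ℝ) * θ k + (((∑ j, x j : ℤ) : ℝ) - m * k) * c := by
    rw [Finset.sum_add_distrib, ← Finset.sum_mul, Finset.sum_const]
    push_cast
    rw [Finset.sum_sub_distrib, Finset.sum_const]
    simp
    try ring
  have cm : (m : ℝ) = (A : ℝ) + B := by exact_mod_cast hAB.symm
  have cs : ((∑ j, x j : ℤ) : ℝ) = (A : ℝ) * k + B * (k + 1) := by
    exact_mod_cast hsum.symm
  have heq : (A : ℝ) * θ k + (B : ℝ) * θ (k + 1)
      = (m : ℝ) * θ k + (((∑ j, x j : ℤ) : ℝ) - m * k) * c := by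
    rw [cm, cs, hc]; ring
  linarith [hsum2, hl.symm.le, hl.le]
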